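/- Under the standing assumptions (h C² with h(0)=0, h'>0, h''≥0; λ>0 C¹ with (hλ)'>0; δ>0; y_∞ < y₀ < 0 the roots of hλ + h' + δ = 0 and hλ + δ = 0 respectively), the expression D(y) := (δ + 2hλ)(h')² + (δ² + 2δhλ + h²λ² + h²λ')h' - h(δ + hλ)h'' is strictly negative for all y in (y_∞, y₀]. -/

import Mathlib

open Real

/-- The numerator `D(y) = (δ+2hλ)(h')² + (δ²+2δhλ+h²λ²+h²λ')h' - h(δ+hλ)h''` of the
free-boundary derivative is strictly negative on `(y_∞, y₀]`. -/
theorem stmt4 (h lam : ℝ → ℝ) (δ y₀ yInf : ℝ)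
    (hC2 : ContDiff ℝ 2 h) (hh0 : h 0 = 0)
    (hh' : ∀ y, 0 < deriv h y)
    (hh'' : ∀ y, 0 ≤ deriv (deriv h) y)
    (hlamC1 : ContDiff ℝ 1 lam) (hlampos : ∀ y, 0 < lam y)
    (hhlam' : ∀ y, 0 < deriv (fun z => h z * lam z) y)
    (hδ : 0 < δ)
    (hy₀lt : y₀ < 0) (hyInflt : yInf < y₀)
    (hy₀ : h y₀ * lam y₀ + δ = 0)
    (hy₀uniq : ∀ z, h z * lam z + δ = 0 → z = y₀)
    (hyInf : h yInf * lam yInf + deriv h yInf + δ = 0)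
    (hyInfuniq : ∀ z, h z * lam z + deriv h z + δ = 0 → z = yInf)
    (D : ℝ → ℝ)
    (hD : ∀ y, D y =
      (δ + 2 * h y * lam y) * (deriv h y) ^ 2
      + (δ ^ 2 + 2 * δ * h y * lam y + (h y) ^ 2 * (lam y) ^ 2
          + (h y) ^ 2 * deriv lam y) * deriv h y
      - h y * (δ + h y * lam y) * deriv (deriv h) y) :
    ∀ y ∈ Set.Ioc yInf y₀, D y < 0 := by
  have hdiff : Differentiable ℝ h := hC2.differentiable (by norm_num)
  have hlamdiff : Differentiable ℝ lam := hlamC1.differentiable (by norm_num)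
  have hderivC1 : ContDiff ℝ 1 (deriv h) := by
    have := (contDiff_succ_iff_deriv (n := 1)).mp (by exact hC2)
    exact this.2.2
  have hderivdiff : Differentiable ℝ (deriv h) := hderivC1.differentiable (by norm_num)
  -- strict monotonicity of h, of H = h*lam, and of G = h*lam + h'
  have hmono : StrictMono h := strictMono_of_deriv_pos hh'
  have hHmono : StrictMono (fun z => h z * lam z) := strictMono_of_deriv_pos hhlam'
  have hHdiff : Differentiable ℝ (fun z => h z * lam z) := hdiff.mul hlamdiff
  have hGmono : StrictMono (fun z => h z * lam z + deriv h z) := by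
    apply strictMono_of_deriv_pos
    intro x
    have e : deriv (fun z => h z * lam z + deriv h z) x
        = deriv (fun z => h z * lam z) x + deriv (deriv h) x :=
      deriv_add (hHdiff x) (hderivdiff x)
    rw [e]
    have := hhlam' x
    have := hh'' x
    linarith
  intro y hy
  obtain ⟨hy1, hy2⟩ := hy
  -- h y < 0
  have hyneg : h y < 0 := by
    have h1 : h y ≤ h y₀ := hmono.le_iff_le.mpr hy2
    have h2 : h y₀ < h 0 := hmono hy₀lt
    rw [hh0] at h2
    linarith
  -- δ + h y * lam y ≤ 0
  have ha : δ + h y * lam y ≤ 0 := by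
    have : h y * lam y ≤ h y₀ * lam y₀ := hHmono.le_iff_le.mpr hy2
    linarith
  -- δ + h y * lam y + deriv h y > 0
  have hah : 0 < δ + h y * lam y + deriv h y := by
    have : h yInf * lam yInf + deriv h yInf < h y * lam y + deriv h y := hGmono hy1
    linarith
  -- derivative of product
  have hH' : 0 < deriv h y * lam y + h y * deriv lam y := by
    have e : deriv (fun z => h z * lam z) y = deriv h y * lam y + h y * deriv lam y :=
      deriv_mul (hdiff y) (hlamdiff y)
    have := hhlam' y
    linarith [e ▸ this]
  have hp := hh' y
  have hpp := hh'' y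
  -- key algebraic decomposition
  have key : D y = (δ + h y * lam y) *
      ((deriv h y) ^ 2 + (δ + h y * lam y) * deriv h y - h y * deriv (deriv h) y)
      + h y * (deriv h y * lam y + h y * deriv lam y) * deriv h y := by
    rw [hD y]; ring
  rw [key]
  have hB : 0 < (deriv h y) ^ 2 + (δ + h y * lam y) * deriv h y - h y * deriv (deriv h) y := by
    nlinarith [mul_pos hah hp, mul_nonneg (neg_nonneg.mpr hyneg.le) hpp]
  have t1 : (δ + h y * lam y) *
      ((deriv h y) ^ 2 + (δ + h y * lam y) * deriv h y - h y * deriv (deriv h) y) ≤ 0 :=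
    mul_nonpos_of_nonpos_of_nonneg ha hB.le
  have t2 : h y * (deriv h y * lam y + h y * deriv lam y) * deriv h y < 0 := by
    nlinarith [mul_pos hH' hp]
  linarith
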